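/- Lions–Stampacchia existence and uniqueness: Let H be a real Hilbert space, a : H × H → ℝ a bounded bilinear form that is coercive (a(x,x) ≥ α‖x‖² for some α > 0, without assuming symmetry), ℓ ∈ H' a bounded linear functional, and K ⊆ H a nonempty closed convex set. Then there exists a unique x ∈ K such that a(x, v − x) ≥ ℓ(v − x) for all v ∈ K. -/

import Mathlib

/-- Lions–Stampacchia theorem: for a bounded, coercive (not necessarily symmetric) bilinear
form `a` on a real Hilbert space `H`, a bounded linear functional `l`, and a nonempty closed
convex set `K`, there is a unique `x ∈ K` with `a(x, v − x) ≥ l(v − x)` for all `v ∈ K`. -/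
theorem stmt8 {H : Type*} [NormedAddCommGroup H] [InnerProductSpace ℝ H] [CompleteSpace H]
    (a : H →ₗ[ℝ] H →ₗ[ℝ] ℝ) (M α : ℝ)
    (hbdd : ∀ x y : H, |a x y| ≤ M * ‖x‖ * ‖y‖)
    (hα : 0 < α) (hcoer : ∀ x : H, α * ‖x‖ ^ 2 ≤ a x x)
    (l : H →L[ℝ] ℝ)
    (K : Set H) (hKne : K.Nonempty) (hKcl : IsClosed K) (hKconv : Convex ℝ K) :
    ∃! x : H, x ∈ K ∧ ∀ v ∈ K, l (v - x) ≤ a x (v - x) := by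
  classical
  set M' := max M α with hM'def
  have hM'pos : 0 < M' := lt_of_lt_of_le hα (le_max_right _ _)
  have hM'α : α ≤ M' := le_max_right _ _
  have hMM' : M ≤ M' := le_max_left _ _
  have hbdd' : ∀ x y : H, |a x y| ≤ M' * ‖x‖ * ‖y‖ := by
    intro x y
    refine (hbdd x y).trans ?_
    have hx := norm_nonneg x; have hy := norm_nonneg y
    exact mul_le_mul_of_nonneg_right (mul_le_mul_of_nonneg_right hMM' hx) hy
  -- projection onto K
  have hproj : ∀ u : H, ∃ p, p ∈ K ∧ ∀ w ∈ K, inner ℝ (u - p) (w - p) ≤ (0 : ℝ) := by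
    intro u
    obtain ⟨v, hv, hv'⟩ := exists_norm_eq_iInf_of_complete_convex hKne hKcl.isComplete hKconv u
    exact ⟨v, hv, (norm_eq_iInf_iff_real_inner_le_zero hKconv hv).1 hv'⟩
  choose P hPK hPle using hproj
  have hPlip : ∀ u w : H, ‖P u - P w‖ ≤ ‖u - w‖ := by
    intro u w
    have h1 : inner ℝ (u - P u) (P w - P u) ≤ (0 : ℝ) := hPle u (P w) (hPK w)
    have h2 : inner ℝ (w - P w) (P u - P w) ≤ (0 : ℝ) := hPle w (P u) (hPK u)
    have key : ‖P u - P w‖ ^ 2 ≤ inner ℝ (u - w) (P u - P w) := by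
      have e1 : inner ℝ (P u - P w) (P u - P w) = ‖P u - P w‖ ^ 2 :=
        real_inner_self_eq_norm_sq _
      have h1' : inner ℝ (P u - u) (P u - P w) ≤ (0 : ℝ) := by
        have : (inner ℝ (u - P u) (P w - P u) : ℝ) = inner ℝ (P u - u) (P u - P w) := by
          rw [← neg_sub (P u) u, ← neg_sub (P u) (P w), inner_neg_neg]
        linarith [this ▸ h1]
      have expand : (inner ℝ (P u - P w) (P u - P w) : ℝ)
          = (inner ℝ (P u - u) (P u - P w) : ℝ) + (inner ℝ (u - w) (P u - P w) : ℝ)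
            + (inner ℝ (w - P w) (P u - P w) : ℝ) := by
        rw [← inner_add_left, ← inner_add_left]
        congr 1
        abel
      linarith [e1, expand, h1', h2]
    have hcs : inner ℝ (u - w) (P u - P w) ≤ ‖u - w‖ * ‖P u - P w‖ :=
      real_inner_le_norm _ _
    nlinarith [norm_nonneg (P u - P w), norm_nonneg (u - w)]
  -- Riesz representatives
  have hAex : ∀ x : H, ∃ Ax : H, ∀ y : H, (inner ℝ Ax y : ℝ) = a x y := by
    intro x
    refine ⟨(InnerProductSpace.toDual ℝ H).symm
      ((a x).mkContinuous (M' * ‖x‖) fun y => ?_), fun y => ?_⟩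
    · calc ‖a x y‖ = |a x y| := rfl
        _ ≤ M' * ‖x‖ * ‖y‖ := hbdd' x y
    · rw [InnerProductSpace.toDual_symm_apply]
      rfl
  choose A hA using hAex
  obtain ⟨f, hf⟩ : ∃ f : H, ∀ y : H, (inner ℝ f y : ℝ) = l y :=
    ⟨(InnerProductSpace.toDual ℝ H).symm l, fun y => by
      rw [InnerProductSpace.toDual_symm_apply]⟩
  have hM'ne : M' ≠ 0 := ne_of_gt hM'pos
  set ρ : ℝ := α / M' ^ 2 with hρdef
  have hρpos : 0 < ρ := div_pos hα (by positivity)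
  set C : ℝ := 1 - α ^ 2 / M' ^ 2 with hCdef
  have hC0 : 0 ≤ C := by
    rw [hCdef, sub_nonneg, div_le_one (by positivity)]
    nlinarith
  have hC1 : C < 1 := by
    rw [hCdef]
    have : 0 < α ^ 2 / M' ^ 2 := by positivity
    linarith
  -- key contraction estimate
  have hkey : ∀ u w : H,
      ‖(u - ρ • (A u - f)) - (w - ρ • (A w - f))‖ ^ 2 ≤ C * ‖u - w‖ ^ 2 := by
    intro u w
    have hveq : (u - ρ • (A u - f)) - (w - ρ • (A w - f))
        = (u - w) - ρ • (A u - A w) := by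
      rw [smul_sub, smul_sub, smul_sub]; abel
    rw [hveq]
    set z := u - w with hz
    set d := A u - A w with hd
    have hdz : ∀ y : H, (inner ℝ d y : ℝ) = a z y := by
      intro y
      rw [hd, inner_sub_left, hA, hA, hz, map_sub]
      simp
    have hcz : α * ‖z‖ ^ 2 ≤ (inner ℝ d z : ℝ) := by rw [hdz]; exact hcoer z
    have hdb : ‖d‖ ≤ M' * ‖z‖ := by
      have h1 : ‖d‖ ^ 2 = a z d := by rw [← hdz]; exact (real_inner_self_eq_norm_sq d).symm
      have h2 : a z d ≤ M' * ‖z‖ * ‖d‖ := (le_abs_self _).trans (hbdd' z d)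
      have h3 : ‖d‖ * ‖d‖ ≤ (M' * ‖z‖) * ‖d‖ := by nlinarith
      rcases (norm_nonneg d).eq_or_lt with h0 | h0
      · rw [← h0]; positivity
      · exact le_of_mul_le_mul_right h3 h0
    have hexp : ‖z - ρ • d‖ ^ 2
        = ‖z‖ ^ 2 - 2 * ρ * (inner ℝ d z : ℝ) + ρ ^ 2 * ‖d‖ ^ 2 := by
      rw [norm_sub_sq_real, real_inner_smul_right, norm_smul, Real.norm_eq_abs,
        abs_of_pos hρpos, mul_pow, real_inner_comm]
      ring
    rw [hexp]
    have hd2 : ‖d‖ ^ 2 ≤ (M' * ‖z‖) ^ 2 := by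
      nlinarith [norm_nonneg d, norm_nonneg z]
    have hb1 : ρ ^ 2 * ‖d‖ ^ 2 ≤ ρ ^ 2 * (M' * ‖z‖) ^ 2 :=
      mul_le_mul_of_nonneg_left hd2 (by positivity)
    have hb2 : 2 * ρ * (α * ‖z‖ ^ 2) ≤ 2 * ρ * (inner ℝ d z : ℝ) :=
      mul_le_mul_of_nonneg_left hcz (by positivity)
    have hCz : C * ‖z‖ ^ 2 = ‖z‖ ^ 2 - 2 * ρ * (α * ‖z‖ ^ 2) + ρ ^ 2 * (M' * ‖z‖) ^ 2 := by
      rw [hCdef, hρdef]; field_simp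
      ring
    linarith
  -- contraction mapping on K
  haveI : Nonempty ↥K := hKne.to_subtype
  haveI : CompleteSpace ↥K := hKcl.completeSpace_coe
  set T : ↥K → ↥K := fun z => ⟨P ((z : H) - ρ • (A (z : H) - f)), hPK _⟩ with hT
  set k : NNReal := ⟨Real.sqrt C, Real.sqrt_nonneg C⟩ with hkdef
  have hksqrt : (k : ℝ) = Real.sqrt C := rfl
  have hklt : k < 1 := by
    rw [← NNReal.coe_lt_coe, hksqrt, NNReal.coe_one]
    calc Real.sqrt C < Real.sqrt 1 := Real.sqrt_lt_sqrt hC0 hC1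
      _ = 1 := Real.sqrt_one
  have hTlip : LipschitzWith k T := by
    apply LipschitzWith.of_dist_le_mul
    intro x y
    rw [Subtype.dist_eq, dist_eq_norm, Subtype.dist_eq, dist_eq_norm]
    have h1 : ‖(T x : H) - (T y : H)‖
        ≤ ‖((x : H) - ρ • (A (x : H) - f)) - ((y : H) - ρ • (A (y : H) - f))‖ := hPlip _ _
    have h2 := hkey (x : H) (y : H)
    have h4 : ‖(T x : H) - (T y : H)‖ ^ 2 ≤ C * ‖(x : H) - (y : H)‖ ^ 2 := by
      nlinarith [norm_nonneg (((x : H) - ρ • (A (x : H) - f)) - ((y : H) - ρ • (A (y : H) - f))),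
        norm_nonneg ((T x : H) - (T y : H))]
    rw [hksqrt]
    calc ‖(T x : H) - (T y : H)‖ = Real.sqrt (‖(T x : H) - (T y : H)‖ ^ 2) :=
          (Real.sqrt_sq (norm_nonneg _)).symm
      _ ≤ Real.sqrt (C * ‖(x : H) - (y : H)‖ ^ 2) := Real.sqrt_le_sqrt h4
      _ = Real.sqrt C * ‖(x : H) - (y : H)‖ := by
          rw [Real.sqrt_mul hC0, Real.sqrt_sq (norm_nonneg _)]
  have hcontr : ContractingWith k T := ⟨hklt, hTlip⟩
  set xf : ↥K := ContractingWith.fixedPoint T hcontr with hxf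
  have hfix : T xf = xf := hcontr.fixedPoint_isFixedPt
  set x₀ : H := (xf : H) with hx₀def
  have hx₀K : x₀ ∈ K := xf.2
  have hPfix : P (x₀ - ρ • (A x₀ - f)) = x₀ := congrArg Subtype.val hfix
  have hVI : ∀ v ∈ K, l (v - x₀) ≤ a x₀ (v - x₀) := by
    intro v hv
    have h := hPle (x₀ - ρ • (A x₀ - f)) v hv
    rw [hPfix] at h
    have e : (x₀ - ρ • (A x₀ - f)) - x₀ = -(ρ • (A x₀ - f)) := by abel
    rw [e, inner_neg_left, real_inner_smul_left, inner_sub_left, hA, hf] at h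
    nlinarith
  refine ⟨x₀, ⟨hx₀K, hVI⟩, ?_⟩
  rintro y ⟨hyK, hy⟩
  have h1 := hy x₀ hx₀K
  have h2 := hVI y hyK
  have hc := hcoer (y - x₀)
  have he : a (y - x₀) (y - x₀) = a y (y - x₀) - a x₀ (y - x₀) := by
    rw [map_sub]; simp only [LinearMap.sub_apply, map_sub]; ring
  have hl1 : l (x₀ - y) = - l (y - x₀) := by
    rw [show x₀ - y = -(y - x₀) by abel, map_neg]
  have ha1 : a y (x₀ - y) = - a y (y - x₀) := by
    rw [show x₀ - y = -(y - x₀) by abel, map_neg]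
  have hsq : ‖y - x₀‖ ^ 2 ≤ 0 := by nlinarith
  have hsq0 : ‖y - x₀‖ ^ 2 = 0 := le_antisymm hsq (sq_nonneg _)
  have : y - x₀ = 0 := by
    have := pow_eq_zero_iff (n := 2) (by norm_num) |>.mp hsq0
    exact norm_eq_zero.mp this
  exact sub_eq_zero.mp this
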